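/- For n ≥ 1 let φ_exp = ⋀_{i=1}^n □^{i-1}(◇□^{n-i} p_i ∧ ◇□^{n-i} p̄_i). If M is a model based on a binary tree with root r and M,r ⊨ φ_exp, then the worlds of depth at most n form a complete binary tree of depth n (every world of depth < n has exactly two children), and for every truth assignment α : {1,…,n} → {true, false} there is exactly one world w at depth n such that for all i, M,w ⊨ p_i if and only if α(i) = true. -/

import Mathlib

namespace PoorMansModal

/-- Modal formulas over propositional variables of type `α`: variables `p`,
negated variables `p̄`, general negation, conjunction, disjunction, box, diamond,
and the constants `true` and `false`. -/
inductive Fml (α : Type) : Type where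
  | var : α → Fml α
  | nvar : α → Fml α
  | neg : Fml α → Fml α
  | and : Fml α → Fml α → Fml α
  | or : Fml α → Fml α → Fml α
  | box : Fml α → Fml α
  | dia : Fml α → Fml α
  | tru : Fml α
  | fls : Fml α

/-- A Kripke model: a nonempty set of worlds, an accessibility relation, and a valuation. -/
structure Kripke (α : Type) where
  World : Type
  nonempty : Nonempty World
  R : World → World → Prop
  V : α → World → Prop

/-- Truth of a formula at a world of a model. -/
def Sat {α : Type} (M : Kripke α) : Fml α → M.World → Prop
  | .var p, w => M.V p w
  | .nvar p, w => ¬ M.V p w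
  | .neg φ, w => ¬ Sat M φ w
  | .and φ ψ, w => Sat M φ w ∧ Sat M ψ w
  | .or φ ψ, w => Sat M φ w ∨ Sat M ψ w
  | .box φ, w => ∀ v, M.R w v → Sat M φ v
  | .dia φ, w => ∃ v, M.R w v ∧ Sat M φ v
  | .tru, _ => True
  | .fls, _ => False

/-- Modal depth: depth of nesting of `□` and `◇`. -/
def mdep {α : Type} : Fml α → ℕ
  | .var _ => 0
  | .nvar _ => 0
  | .neg φ => mdep φ
  | .and φ ψ => max (mdep φ) (mdep ψ)
  | .or φ ψ => max (mdep φ) (mdep ψ)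
  | .box φ => mdep φ + 1
  | .dia φ => mdep φ + 1
  | .tru => 0
  | .fls => 0

/-- Conjunction of a list of formulas; the empty conjunction is the always-true formula. -/
def bigConj {α : Type} : List (Fml α) → Fml α
  | [] => .tru
  | [φ] => φ
  | φ :: rest => .and φ (bigConj rest)

/-- `□^k φ`. -/
def boxI {α : Type} : ℕ → Fml α → Fml α
  | 0, φ => φ
  | k + 1, φ => .box (boxI k φ)

/-- `◇^k φ`. -/
def diaI {α : Type} : ℕ → Fml α → Fml α
  | 0, φ => φ
  | k + 1, φ => .dia (diaI k φ)

/-- `(◇□)^k φ`. -/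
def diaBoxI {α : Type} : ℕ → Fml α → Fml α
  | 0, φ => φ
  | k + 1, φ => .dia (.box (diaBoxI k φ))

/-- The literal with variable `l.1` and sign `l.2` (`true` = positive). -/
def litF {α : Type} (l : α × Bool) : Fml α := if l.2 then .var l.1 else .nvar l.1

/-- The variable `p` occurs in the formula. -/
def occursV {α : Type} (p : α) : Fml α → Prop
  | .var q => p = q
  | .nvar q => p = q
  | .neg φ => occursV p φ
  | .and φ ψ => occursV p φ ∨ occursV p ψ
  | .or φ ψ => occursV p φ ∨ occursV p ψ
  | .box φ => occursV p φ
  | .dia φ => occursV p φ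
  | .tru => False
  | .fls => False

/-- Poor man's formulas: built from literals, `∧`, `□`, `◇` only. -/
def PoorF {α : Type} : Fml α → Prop
  | .var _ => True
  | .nvar _ => True
  | .and φ ψ => PoorF φ ∧ PoorF ψ
  | .box φ => PoorF φ
  | .dia φ => PoorF φ
  | _ => False

/-- Formulas of the language `L`: built from literals, `∧`, `∨`, `□`, `◇`. -/
def InL {α : Type} : Fml α → Prop
  | .var _ => True
  | .nvar _ => True
  | .and φ ψ => InL φ ∧ InL ψ
  | .or φ ψ => InL φ ∧ InL ψ
  | .box φ => InL φ
  | .dia φ => InL φ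
  | _ => False

/-- Every world has at most one successor. -/
def AtMostOne {W : Type} (R : W → W → Prop) : Prop :=
  ∀ w v v', R w v → R w v' → v = v'

/-- Every world has at least one successor. -/
def AtLeastOne {W : Type} (R : W → W → Prop) : Prop :=
  ∀ w, ∃ v, R w v

/-- Every world has at most two successors. -/
def AtMostTwo {W : Type} (R : W → W → Prop) : Prop :=
  ∀ w v₁ v₂ v₃, R w v₁ → R w v₂ → R w v₃ → v₁ = v₂ ∨ v₁ = v₃ ∨ v₂ = v₃

/-- `chainR R n w v`: there is an `R`-path of length exactly `n` from `w` to `v`. -/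
def chainR {W : Type} (R : W → W → Prop) : ℕ → W → W → Prop
  | 0, w, v => w = v
  | k + 1, w, v => ∃ u, R w u ∧ chainR R k u v

/-- `R` is the parent-child relation of a rooted tree with root `root`
in which every node has at most two children. -/
structure IsBinTree {W : Type} (R : W → W → Prop) (root : W) : Prop where
  reach : ∀ w, Relation.ReflTransGen R root w
  root_no_parent : ∀ w, ¬ R w root
  unique_parent : ∀ w v v', R v w → R v' w → v = v'
  acyclic : ∀ w, ¬ Relation.TransGen R w w
  at_most_two_children : ∀ w v₁ v₂ v₃, R w v₁ → R w v₂ → R w v₃ → v₁ = v₂ ∨ v₁ = v₃ ∨ v₂ = v₃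

/-- `φ_exp = ⋀_{i=1}^n □^{i-1}(◇□^{n-i} p_i ∧ ◇□^{n-i} p̄_i)`, with `p_i = var i`. -/
def phiExp (n : ℕ) : Fml ℕ :=
  bigConj ((List.range n).map (fun j =>
    boxI j (.and (.dia (boxI (n - 1 - j) (.var (j + 1))))
                 (.dia (boxI (n - 1 - j) (.nvar (j + 1)))))))

/-- Satisfiability with respect to the class of all frames. -/
def SatAll (φ : Fml ℕ) : Prop := ∃ (M : Kripke ℕ) (w : M.World), Sat M φ w

/-- Satisfiability with respect to `F≤1`. -/
def SatLe1 (φ : Fml ℕ) : Prop := ∃ M : Kripke ℕ, AtMostOne M.R ∧ ∃ w, Sat M φ w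

/-- Satisfiability with respect to `F≥1`. -/
def SatGe1 (φ : Fml ℕ) : Prop := ∃ M : Kripke ℕ, AtLeastOne M.R ∧ ∃ w, Sat M φ w

/-- Satisfiability with respect to `F≤2`. -/
def SatLe2 (φ : Fml ℕ) : Prop := ∃ M : Kripke ℕ, AtMostTwo M.R ∧ ∃ w, Sat M φ w

/-- A one-world model with no successors, realizing the boolean assignment `v`;
truth at its world is propositional truth for formulas without modal operators. -/
def propModel (v : ℕ → Bool) : Kripke ℕ :=
  { World := Unit, nonempty := ⟨()⟩, R := fun _ _ => False, V := fun p _ => v p = true }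

/-- Propositional satisfaction of `φ` under the assignment `v`. -/
def PropSat (v : ℕ → Bool) (φ : Fml ℕ) : Prop := Sat (propModel v) φ ()


lemma sat_bigConj {α : Type} (M : Kripke α) (w : M.World) :
    ∀ L : List (Fml α), Sat M (bigConj L) w ↔ ∀ φ ∈ L, Sat M φ w
  | [] => by simp [bigConj, Sat]
  | [φ] => by simp [bigConj]
  | φ :: ψ :: rest => by
      have ih := sat_bigConj M w (ψ :: rest)
      show Sat M φ w ∧ Sat M (bigConj (ψ :: rest)) w ↔ _
      rw [ih]
      constructor
      · rintro ⟨h1, h2⟩ χ hχ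
        rcases List.mem_cons.1 hχ with hχ | hχ
        · exact hχ ▸ h1
        · exact h2 χ hχ
      · intro hh
        exact ⟨hh φ List.mem_cons_self, fun χ hχ => hh χ (List.mem_cons_of_mem _ hχ)⟩

lemma sat_boxI_chain {α : Type} (M : Kripke α) (φ : Fml α) :
    ∀ k (w v : M.World), Sat M (boxI k φ) w → chainR M.R k w v → Sat M φ v
  | 0, w, v, hs, hc => by cases hc; exact hs
  | k + 1, w, v, hs, hc => by
      obtain ⟨u, hwu, huc⟩ := hc
      exact sat_boxI_chain M φ k u v (hs u hwu) huc

lemma chainR_snoc {W : Type} (R : W → W → Prop) :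
    ∀ k (w u v : W), chainR R k w u → R u v → chainR R (k + 1) w v
  | 0, w, u, v, hc, hr => by cases hc; exact ⟨v, hr, rfl⟩
  | k + 1, w, u, v, hc, hr => by
      obtain ⟨x, hwx, hxc⟩ := hc
      exact ⟨x, hwx, chainR_snoc R k x u v hxc hr⟩

lemma diverge {W : Type} (R : W → W → Prop) :
    ∀ k (s w w' : W), chainR R k s w → chainR R k s w' → w ≠ w' →
      ∃ j u v v', j < k ∧ chainR R j s u ∧ R u v ∧ R u v' ∧ v ≠ v' ∧
        chainR R (k - 1 - j) v w ∧ chainR R (k - 1 - j) v' w'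
  | 0, s, w, w', hc, hc', hne => by cases hc; cases hc'; exact absurd rfl hne
  | k + 1, s, w, w', hc, hc', hne => by
      obtain ⟨a, hsa, hac⟩ := hc
      obtain ⟨a', hsa', hac'⟩ := hc'
      by_cases hauto : a = a'
      · subst hauto
        obtain ⟨j, u, v, v', hj, hcu, hv, hv', hvv, hcv, hcv'⟩ :=
          diverge R k a w w' hac hac' hne
        refine ⟨j + 1, u, v, v', by omega, ⟨a, hsa, hcu⟩, hv, hv', hvv, ?_, ?_⟩
        · have : k + 1 - 1 - (j + 1) = k - 1 - j := by omega
          rwa [this]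
        · have : k + 1 - 1 - (j + 1) = k - 1 - j := by omega
          rwa [this]
      · refine ⟨0, s, a, a', by omega, rfl, hsa, hsa', hauto, ?_, ?_⟩
        · simpa using hac
        · simpa using hac'

/-- If `M` is a model based on a binary tree with root `r` and
`M, r ⊨ φ_exp`, then every world of depth `< n` has exactly two children, and for every
truth assignment `α` to `p₁, …, p_n` there is exactly one world at depth `n`
realizing `α`. -/
theorem stmt10 (n : ℕ) (hn : 1 ≤ n) (M : Kripke ℕ) (r : M.World)
    (htree : IsBinTree M.R r) (h : Sat M (phiExp n) r) :
    (∀ k, k < n → ∀ w, chainR M.R k r w →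
        ∃ v₁ v₂, v₁ ≠ v₂ ∧ M.R w v₁ ∧ M.R w v₂ ∧ ∀ v, M.R w v → v = v₁ ∨ v = v₂) ∧
    (∀ α : ℕ → Bool,
        ∃! w, chainR M.R n r w ∧ ∀ i, 1 ≤ i → i ≤ n → (M.V i w ↔ α i = true)) := by
  classical
  have hconj : ∀ j, j < n → Sat M (boxI j (.and (.dia (boxI (n - 1 - j) (.var (j + 1))))
      (.dia (boxI (n - 1 - j) (.nvar (j + 1)))))) r := by
    intro j hj
    apply (sat_bigConj M r _).1 h
    simp only [phiExp, List.mem_map, List.mem_range]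
    exact ⟨j, hj, rfl⟩
  have hC : ∀ j, j < n → ∀ u, chainR M.R j r u →
      (∃ v, M.R u v ∧ Sat M (boxI (n - 1 - j) (.var (j + 1))) v) ∧
      (∃ v, M.R u v ∧ Sat M (boxI (n - 1 - j) (.nvar (j + 1))) v) := by
    intro j hj u hu
    exact sat_boxI_chain M _ j r u (hconj j hj) hu
  have hS : ∀ j, j < n → ∀ u, chainR M.R j r u → ∃ v, M.R u v := by
    intro j hj u hu
    obtain ⟨v, hv, _⟩ := (hC j hj u hu).1
    exact ⟨v, hv⟩
  have hExt : ∀ m j, j + m ≤ n → ∀ u, chainR M.R j r u → ∃ z, chainR M.R m u z := by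
    intro m
    induction m with
    | zero => intro j _ u _; exact ⟨u, rfl⟩
    | succ m ih =>
      intro j hjm u hu
      obtain ⟨v, hv⟩ := hS j (by omega) u hu
      obtain ⟨z, hz⟩ := ih (j + 1) (by omega) v (chainR_snoc M.R j r u v hu hv)
      exact ⟨z, v, hv, hz⟩
  have hNe : ∀ j, j < n → ∀ u, chainR M.R j r u → ∀ v₁ v₂, M.R u v₁ → M.R u v₂ →
      Sat M (boxI (n - 1 - j) (.var (j + 1))) v₁ →
      Sat M (boxI (n - 1 - j) (.nvar (j + 1))) v₂ → v₁ ≠ v₂ := by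
    intro j hj u hu v₁ v₂ h1 _h2 hs1 hs2 heq
    subst heq
    obtain ⟨z, hz⟩ := hExt (n - 1 - j) (j + 1) (by omega) v₁ (chainR_snoc M.R j r u v₁ hu h1)
    exact (sat_boxI_chain M _ _ _ _ hs2 hz) (sat_boxI_chain M _ _ _ _ hs1 hz)
  have part1 : ∀ k, k < n → ∀ w, chainR M.R k r w →
      ∃ v₁ v₂, v₁ ≠ v₂ ∧ M.R w v₁ ∧ M.R w v₂ ∧ ∀ v, M.R w v → v = v₁ ∨ v = v₂ := by
    intro k hk w hw
    obtain ⟨⟨v₁, h1, hs1⟩, ⟨v₂, h2, hs2⟩⟩ := hC k hk w hw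
    have hne := hNe k hk w hw v₁ v₂ h1 h2 hs1 hs2
    refine ⟨v₁, v₂, hne, h1, h2, fun v hv => ?_⟩
    rcases htree.at_most_two_children w v v₁ v₂ hv h1 h2 with hh | hh | hh
    · exact Or.inl hh
    · exact Or.inr hh
    · exact absurd hh hne
  refine ⟨part1, fun α => ?_⟩
  have hpath : ∀ j, j ≤ n → ∃ w, chainR M.R j r w ∧
      ∀ i, 1 ≤ i → i ≤ j → Sat M (boxI (n - j) (litF (i, α i))) w := by
    intro j
    induction j with
    | zero => intro _; exact ⟨r, rfl, fun i h1 h2 => by omega⟩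
    | succ j ih =>
      intro hj
      obtain ⟨w, hw, hsat⟩ := ih (by omega)
      obtain ⟨⟨v₁, h1, hs1⟩, ⟨v₂, h2, hs2⟩⟩ := hC j (by omega) w hw
      have harith : n - (j + 1) = n - 1 - j := by omega
      have step : ∀ v, M.R w v → ∀ i, 1 ≤ i → i ≤ j →
          Sat M (boxI (n - (j + 1)) (litF (i, α i))) v := by
        intro v hv i hi1 hi2
        have hb := hsat i hi1 hi2
        have heq : n - j = (n - (j + 1)) + 1 := by omega
        rw [heq] at hb
        exact hb v hv
      by_cases hα : α (j + 1) = true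
      · refine ⟨v₁, chainR_snoc M.R j r w v₁ hw h1, fun i hi1 hi2 => ?_⟩
        rcases Nat.lt_or_ge i (j + 1) with hlt | hge
        · exact step v₁ h1 i hi1 (by omega)
        · have hi : i = j + 1 := by omega
          have hl : litF (i, α i) = Fml.var (j + 1) := by rw [hi]; simp [litF, hα]
          rw [hl, harith]
          exact hs1
      · refine ⟨v₂, chainR_snoc M.R j r w v₂ hw h2, fun i hi1 hi2 => ?_⟩
        rcases Nat.lt_or_ge i (j + 1) with hlt | hge
        · exact step v₂ h2 i hi1 (by omega)
        · have hi : i = j + 1 := by omega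
          have hl : litF (i, α i) = Fml.nvar (j + 1) := by rw [hi]; simp [litF, hα]
          rw [hl, harith]
          exact hs2
  obtain ⟨w, hw, hsat⟩ := hpath n le_rfl
  have hvalw : ∀ i, 1 ≤ i → i ≤ n → (M.V i w ↔ α i = true) := by
    intro i h1 h2
    have hs := hsat i h1 h2
    rw [Nat.sub_self] at hs
    cases hα : α i with
    | true => rw [hα] at hs; simp only [litF, if_pos rfl, boxI] at hs
              exact ⟨fun _ => rfl, fun _ => hs⟩
    | false => rw [hα] at hs; simp only [litF, boxI] at hs
               simp only [Bool.false_eq_true, if_false] at hs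
               exact ⟨fun hv => absurd hv hs, fun hc => by simp at hc⟩
  refine ⟨w, ⟨hw, hvalw⟩, ?_⟩
  rintro w' ⟨hw', hval'⟩
  by_contra hne
  obtain ⟨j, u, v, v', hj, hcu, hv, hv', hvv, hcv, hcv'⟩ :=
    diverge M.R n r w' w hw' hw hne
  obtain ⟨⟨v₁, h1, hs1⟩, ⟨v₂, h2, hs2⟩⟩ := hC j hj u hcu
  have hne12 := hNe j hj u hcu v₁ v₂ h1 h2 hs1 hs2
  have hmem : ∀ x, M.R u x → x = v₁ ∨ x = v₂ := by
    intro x hx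
    rcases htree.at_most_two_children u x v₁ v₂ hx h1 h2 with hh | hh | hh
    · exact Or.inl hh
    · exact Or.inr hh
    · exact absurd hh hne12
  have hiff : M.V (j + 1) w' ↔ M.V (j + 1) w := by
    rw [hval' (j + 1) (by omega) (by omega), hvalw (j + 1) (by omega) (by omega)]
  rcases hmem v hv with hv1 | hv2 <;> rcases hmem v' hv' with hv'1 | hv'2
  · exact hvv (hv1.trans hv'1.symm)
  · subst hv1; subst hv'2
    have hp : M.V (j + 1) w' := sat_boxI_chain M _ _ _ _ hs1 hcv
    have hnp : ¬ M.V (j + 1) w := sat_boxI_chain M _ _ _ _ hs2 hcv'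
    exact hnp (hiff.1 hp)
  · subst hv2; subst hv'1
    have hnp : ¬ M.V (j + 1) w' := sat_boxI_chain M _ _ _ _ hs2 hcv
    have hp : M.V (j + 1) w := sat_boxI_chain M _ _ _ _ hs1 hcv'
    exact hnp (hiff.2 hp)
  · exact hvv (hv2.trans hv'2.symm)

end PoorMansModal
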